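/- Let m ∈ ℕ and let A, B be m×m real matrices that are both positive definite. Then log(det A) + trace(A⁻¹ · B) ≥ log(det B) + m, where log is the natural logarithm. Equivalently, over positive definite A the function A ↦ log(det A) + trace(A⁻¹B) is minimized at A = B, where its value is log(det B) + m. -/

import Mathlib

open Matrix

private lemma logdet_le_trace_sub (m : ℕ) (M : Matrix (Fin m) (Fin m) ℝ)
    (hM : M.PosDef) : Real.log M.det ≤ M.trace - m := by
  have hH := hM.isHermitian
  have hpos := hM.eigenvalues_pos
  have hdet : M.det = ∏ i, hH.eigenvalues i := by
    simpa using hH.det_eq_prod_eigenvalues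
  have hU : star ((IsHermitian.eigenvectorUnitary hH : Matrix (Fin m) (Fin m) ℝ)) *
      (IsHermitian.eigenvectorUnitary hH : Matrix (Fin m) (Fin m) ℝ) = 1 :=
    (Unitary.mem_iff.mp (IsHermitian.eigenvectorUnitary hH).2).1
  have htr : M.trace = ∑ i, hH.eigenvalues i := by
    nth_rewrite 1 [hH.spectral_theorem]
    rw [Unitary.conjStarAlgAut_apply]
    rw [trace_mul_cycle, hU, one_mul]
    simp [trace_diagonal]
  rw [hdet, htr, Real.log_prod (fun i _ => (hpos i).ne')]
  have : ∑ i, Real.log (hH.eigenvalues i) ≤ ∑ i, (hH.eigenvalues i - 1) :=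
    Finset.sum_le_sum fun i _ => by
      have := Real.log_le_sub_one_of_pos (hpos i); linarith
  calc ∑ i, Real.log (hH.eigenvalues i) ≤ ∑ i, (hH.eigenvalues i - 1) := this
    _ = ∑ i, hH.eigenvalues i - m := by rw [Finset.sum_sub_distrib]; simp

theorem logdet_trace_min (m : ℕ) (A B : Matrix (Fin m) (Fin m) ℝ)
    (hA : A.PosDef) (hB : B.PosDef) :
    Real.log B.det + (m : ℝ) ≤ Real.log A.det + (A⁻¹ * B).trace ∧
      Real.log B.det + (B⁻¹ * B).trace = Real.log B.det + (m : ℝ) := by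
  constructor
  · -- let S be the psd square root of A⁻¹
    have hAi : A⁻¹.PosDef := hA.inv
    set S : Matrix (Fin m) (Fin m) ℝ := (open scoped MatrixOrder in CFC.sqrt A⁻¹) with hSdef
    have hS : S.PosSemidef := by
      open scoped MatrixOrder in exact (CFC.sqrt_nonneg _).posSemidef
    have hSS : S * S = A⁻¹ := by
      open scoped MatrixOrder in exact CFC.sqrt_mul_sqrt_self _ hAi.posSemidef.nonneg
    have hdetSne : S.det ≠ 0 := by
      intro h
      have : (A⁻¹).det = 0 := by rw [← hSS, det_mul, h, mul_zero]
      rw [det_nonsing_inv, Ring.inverse_eq_inv] at this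
      exact (inv_ne_zero hA.det_pos.ne') this
    -- M = S * B * S is positive definite
    have hM : (S * B * S).PosDef := by
      refine .of_dotProduct_mulVec_pos ?_ fun x hx => ?_
      · have := isHermitian_conjTranspose_mul_mul S hB.isHermitian
        rwa [hS.isHermitian.eq] at this
      · have hSx : S *ᵥ x ≠ 0 := by
          intro h
          apply hx
          have hinj : Function.Injective (S.mulVec) :=
            mulVec_injective_iff_isUnit.mpr ((isUnit_iff_isUnit_det S).mpr hdetSne.isUnit)
          have : S *ᵥ x = S *ᵥ 0 := by simpa using h
          exact hinj this
        have := hB.dotProduct_mulVec_pos hSx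
        have hcalc : star x ⬝ᵥ (S * B * S) *ᵥ x = star (S *ᵥ x) ⬝ᵥ B *ᵥ (S *ᵥ x) := by
          rw [star_mulVec, hS.isHermitian.eq, ← Matrix.mulVec_mulVec, ← Matrix.mulVec_mulVec]
          rw [Matrix.dotProduct_mulVec (v := star x)]
        rw [hcalc]
        exact this
    have key := logdet_le_trace_sub m _ hM
    -- identify det and trace
    have hdetM : (S * B * S).det = A⁻¹.det * B.det := by
      rw [det_mul, det_mul, ← hSS, det_mul]
      ring
    have htrM : (S * B * S).trace = (A⁻¹ * B).trace := by
      rw [trace_mul_cycle, mul_assoc, ← mul_assoc, hSS]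
    have hlog : Real.log (S * B * S).det = Real.log B.det - Real.log A.det := by
      rw [hdetM, det_nonsing_inv, Ring.inverse_eq_inv, Real.log_mul (inv_ne_zero hA.det_pos.ne') hB.det_pos.ne',
        Real.log_inv]
      ring
    rw [hlog, htrM] at key
    linarith
  · rw [nonsing_inv_mul B (isUnit_iff_ne_zero.mpr hB.det_pos.ne'), trace_one]
    simp
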